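/- Four positive real numbers u₁, u₂, u₃, u₄ are, respectively, the two side lengths and the two diagonal lengths of some nondegenerate parallelogram in the Euclidean plane if and only if they satisfy the equation u₃² + u₄² = 2u₁² + 2u₂² and the inequalities |u₁ − u₂| < u₄ < u₁ + u₂. -/

import Mathlib

open RealInnerProductSpace

/-- A vector in the Euclidean plane with given coordinates. -/
def vec2 (x y : ℝ) : EuclideanSpace ℝ (Fin 2) := !₂[x, y]

@[simp] lemma vec2_apply0 (x y : ℝ) : vec2 x y 0 = x := rfl
@[simp] lemma vec2_apply1 (x y : ℝ) : vec2 x y 1 = y := rfl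

lemma edist2 (x0 x1 y0 y1 : ℝ) :
    dist (vec2 x0 x1) (vec2 y0 y1) = Real.sqrt ((x0 - y0) ^ 2 + (x1 - y1) ^ 2) := by
  rw [EuclideanSpace.dist_eq]
  norm_num [Fin.sum_univ_two, Real.dist_eq, sq_abs, vec2]

/-- If `A - E` is a multiple of `F - E`, the three points are collinear. -/
lemma collinear_of_smul {A E F : EuclideanSpace ℝ (Fin 2)} {c : ℝ}
    (h : A - E = c • (F - E)) : Collinear ℝ ({A, E, F} : Set (EuclideanSpace ℝ (Fin 2))) := by
  rw [collinear_iff_of_mem (show E ∈ ({A, E, F} : Set (EuclideanSpace ℝ (Fin 2))) by simp)]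
  refine ⟨F - E, fun p hp => ?_⟩
  rcases hp with rfl | rfl | rfl
  · exact ⟨c, by rw [← h]; simp⟩
  · exact ⟨0, by simp⟩
  · exact ⟨1, by simp⟩

/-- Characterization of side and diagonal lengths of a nondegenerate parallelogram
via the parallelogram equation and the triangle inequalities on the diagonal `u₄`. -/
theorem parallelogram_characterization_u4
    (u₁ u₂ u₃ u₄ : ℝ) (h₁ : 0 < u₁) (h₂ : 0 < u₂) (h₃ : 0 < u₃) (h₄ : 0 < u₄) :
    (∃ A B F E : EuclideanSpace ℝ (Fin 2),
        B - A = F - E ∧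
        ¬ Collinear ℝ ({A, E, F} : Set (EuclideanSpace ℝ (Fin 2))) ∧
        dist A E = u₁ ∧ dist E F = u₂ ∧ dist A F = u₃ ∧ dist E B = u₄) ↔
      (u₃ ^ 2 + u₄ ^ 2 = 2 * u₁ ^ 2 + 2 * u₂ ^ 2 ∧ |u₁ - u₂| < u₄ ∧ u₄ < u₁ + u₂) := by
  constructor
  · rintro ⟨A, B, F, E, hpar, hncol, hAE, hEF, hAF, hEB⟩
    have hx : ‖A - E‖ = u₁ := by rw [← hAE, dist_eq_norm]
    have hy : ‖F - E‖ = u₂ := by rw [← hEF, dist_eq_norm']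
    have hxy : ‖(A - E) - (F - E)‖ = u₃ := by
      rw [sub_sub_sub_cancel_right, ← hAF, dist_eq_norm]
    have hxy' : ‖(A - E) + (F - E)‖ = u₄ := by
      rw [← hEB, dist_eq_norm', show B - E = (A - E) + (F - E) from by rw [← hpar]; abel]
    set x := A - E
    set y := F - E
    have hy0 : y ≠ 0 := fun h => by rw [h, norm_zero] at hy; exact h₂.ne' hy.symm
    have key : ∀ c : ℝ, x ≠ c • y := fun c hc => hncol (collinear_of_smul hc)
    have hyn : ‖y‖ ≠ 0 := norm_ne_zero_iff.mpr hy0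
    have solve : ∀ z : EuclideanSpace ℝ (Fin 2), ‖y‖ • z = ‖z‖ • y →
        z = (‖y‖⁻¹ * ‖z‖) • y := by
      intro z h
      have h2 := congrArg (fun w : EuclideanSpace ℝ (Fin 2) => (‖y‖)⁻¹ • w) h
      simpa only [smul_smul, inv_mul_cancel₀ hyn, one_smul] using h2
    have hcs1 : ⟪x, y⟫ < u₁ * u₂ := by
      rw [← hx, ← hy]
      exact inner_lt_norm_mul_iff_real.mpr fun h => key _ (solve x h)
    have hcs2 : -(u₁ * u₂) < ⟪x, y⟫ := by
      have h' : ⟪-x, y⟫ < ‖(-x)‖ * ‖y‖ := by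
        refine inner_lt_norm_mul_iff_real.mpr fun h => key (-(‖y‖⁻¹ * ‖-x‖)) ?_
        have h3 := solve (-x) h
        rw [neg_smul, ← h3, neg_neg]
      rw [inner_neg_left, norm_neg, hx, hy] at h'
      linarith
    have hsq1 : u₄ ^ 2 = u₁ ^ 2 + 2 * ⟪x, y⟫ + u₂ ^ 2 := by
      rw [← hx, ← hy, ← hxy', norm_add_sq_real]
    have hsq2 : u₃ ^ 2 = u₁ ^ 2 - 2 * ⟪x, y⟫ + u₂ ^ 2 := by
      rw [← hx, ← hy, ← hxy, norm_sub_sq_real]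
    refine ⟨by linarith, ?_, ?_⟩
    · rw [abs_sub_lt_iff]
      constructor <;> nlinarith
    · nlinarith
  · rintro ⟨heq, habs, hsum⟩
    have hl : (u₁ - u₂) ^ 2 < u₄ ^ 2 := by
      have h0 := abs_nonneg (u₁ - u₂)
      calc (u₁ - u₂) ^ 2 = |u₁ - u₂| ^ 2 := (sq_abs _).symm
        _ < u₄ ^ 2 := by nlinarith
    have hu : u₄ ^ 2 < (u₁ + u₂) ^ 2 := by nlinarith
    set a : ℝ := (u₄ ^ 2 - u₁ ^ 2 - u₂ ^ 2) / (2 * u₁) with ha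
    have h2a : 2 * u₁ * a = u₄ ^ 2 - u₁ ^ 2 - u₂ ^ 2 := by
      rw [ha]; field_simp
    have hb2 : 0 < u₂ ^ 2 - a ^ 2 := by
      have hkey : 0 < (u₄ ^ 2 - (u₁ - u₂) ^ 2) * ((u₁ + u₂) ^ 2 - u₄ ^ 2) := by
        apply mul_pos <;> linarith
      nlinarith [mul_pos h₁ h₁]
    set b : ℝ := Real.sqrt (u₂ ^ 2 - a ^ 2) with hbdef
    have hbpos : 0 < b := Real.sqrt_pos.mpr hb2
    have hb : b ^ 2 = u₂ ^ 2 - a ^ 2 := Real.sq_sqrt hb2.le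
    refine ⟨vec2 u₁ 0, vec2 (u₁ + a) b, vec2 a b, vec2 0 0, ?_, ?_, ?_, ?_, ?_, ?_⟩
    · ext i
      fin_cases i <;> simp [vec2]
    · intro hc
      rw [collinear_iff_of_mem (show vec2 0 0 ∈ _ by simp)] at hc
      obtain ⟨v, hv⟩ := hc
      obtain ⟨r, hr⟩ := hv (vec2 u₁ 0) (by simp)
      obtain ⟨s, hs⟩ := hv (vec2 a b) (by simp)
      have hr1 : (0 : ℝ) = r * v 1 := by
        have h := congrArg (· 1) hr
        simpa [vec2] using h
      have hr0 : u₁ = r * v 0 := by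
        have h := congrArg (· 0) hr
        simpa [vec2] using h
      have hs1 : b = s * v 1 := by
        have h := congrArg (· 1) hs
        simpa [vec2] using h
      rcases mul_eq_zero.mp hr1.symm with h | h
      · rw [h, zero_mul] at hr0; exact absurd hr0 h₁.ne'
      · rw [h, mul_zero] at hs1; exact absurd hs1 hbpos.ne'
    · rw [edist2, show (u₁ - 0) ^ 2 + ((0:ℝ) - 0) ^ 2 = u₁ ^ 2 from by ring]
      exact Real.sqrt_sq h₁.le
    · rw [edist2, show ((0:ℝ) - a) ^ 2 + ((0:ℝ) - b) ^ 2 = u₂ ^ 2 from by linear_combination hb]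
      exact Real.sqrt_sq h₂.le
    · rw [edist2, show (u₁ - a) ^ 2 + ((0:ℝ) - b) ^ 2 = u₃ ^ 2 from by linear_combination hb - h2a - heq]
      exact Real.sqrt_sq h₃.le
    · rw [edist2, show ((0:ℝ) - (u₁ + a)) ^ 2 + ((0:ℝ) - b) ^ 2 = u₄ ^ 2 from by linear_combination hb + h2a]
      exact Real.sqrt_sq h₄.le
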